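/- Let b₀₂, b₃₀ ∈ ℝ. Set Ã(x) = 1 − b₀₂·x + (3/2)·b₃₀·x² − b₀₂·b₃₀·x³, B̃(x) = x + b₃₀·x³, C̃(x) = b₀₂ − (9/2)·b₃₀·x + 3·b₀₂·b₃₀·x², and define f(x) = −(Ã′(x) − C̃(x))/Ã(x), g(x) = Ã(x)·B̃(x). Then there is a neighborhood of 0 on which g′(x) + f(x)·g(x) = 1 for all x. -/

import Mathlib

/-- Zero-Urabe-function isochronicity identity: with `Ã`, `B̃`, `C̃` as below and the
Liénard data `f(x) = −(Ã′(x) − C̃(x))/Ã(x)`, `g(x) = Ã(x)·B̃(x)`, the identity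
`g′(x) + f(x)·g(x) = 1` holds on a neighborhood of `0`. -/
theorem stmt_8 (b02 b30 : ℝ) (A B C f g : ℝ → ℝ)
    (hA : ∀ x : ℝ, A x = 1 - b02*x + (3/2)*b30*x^2 - b02*b30*x^3)
    (hB : ∀ x : ℝ, B x = x + b30*x^3)
    (hC : ∀ x : ℝ, C x = b02 - (9/2)*b30*x + 3*b02*b30*x^2)
    (hf : ∀ x : ℝ, f x = -(deriv A x - C x) / A x)
    (hg : ∀ x : ℝ, g x = A x * B x) :
    ∃ ε > (0 : ℝ), ∀ x : ℝ, |x| < ε → deriv g x + f x * g x = 1 := by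
  have hAfun : A = fun x => 1 - b02*x + (3/2)*b30*x^2 - b02*b30*x^3 := funext hA
  have hBfun : B = fun x => x + b30*x^3 := funext hB
  have hgfun : g = fun x => A x * B x := funext hg
  have hAd : ∀ x : ℝ, HasDerivAt A (-b02 + 3*b30*x - 3*b02*b30*x^2) x := by
    intro x
    rw [hAfun]
    have h1 : HasDerivAt (fun x : ℝ => x) 1 x := hasDerivAt_id x
    have h2 : HasDerivAt (fun x : ℝ => x^2) (2*x) x := by simpa using hasDerivAt_pow 2 x
    have h3 : HasDerivAt (fun x : ℝ => x^3) (3*x^2) x := by simpa using hasDerivAt_pow 3 x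
    have h := (((hasDerivAt_const x (1:ℝ)).sub (h1.const_mul b02)).add
        (h2.const_mul ((3/2)*b30))).sub (h3.const_mul (b02*b30))
    refine h.congr_deriv ?_
    ring
  have hBd : ∀ x : ℝ, HasDerivAt B (1 + 3*b30*x^2) x := by
    intro x
    rw [hBfun]
    have h1 : HasDerivAt (fun x : ℝ => x) 1 x := hasDerivAt_id x
    have h3 : HasDerivAt (fun x : ℝ => x^3) (3*x^2) x := by simpa using hasDerivAt_pow 3 x
    have h := h1.add (h3.const_mul b30)
    refine h.congr_deriv ?_
    ring
  have hgd : ∀ x : ℝ, HasDerivAt g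
      ((-b02 + 3*b30*x - 3*b02*b30*x^2) * B x + A x * (1 + 3*b30*x^2)) x := by
    intro x
    rw [hgfun]
    exact (hAd x).mul (hBd x)
  have hAc : ContinuousAt A 0 := by rw [hAfun]; fun_prop
  have hA0 : A 0 ≠ 0 := by rw [hA]; norm_num
  have hev : ∀ᶠ x in nhds (0:ℝ), A x ≠ 0 := hAc.eventually_ne hA0
  rcases Metric.eventually_nhds_iff.mp hev with ⟨ε, hε, hball⟩
  refine ⟨ε, hε, fun x hx => ?_⟩
  have hAx : A x ≠ 0 := hball (by simpa [Real.dist_eq] using hx)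
  have hfg : f x * g x = (C x - deriv A x) * B x := by
    rw [hf x, hg x]
    field_simp
    ring
  rw [(hgd x).deriv, hfg, (hAd x).deriv, hA x, hB x, hC x]
  ring
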